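/- Let K be a field and G a subgroup of the multiplicative group K^×. Then O_G is nontrivial (O_G ≠ K) if and only if G ≠ K^× and there exists a nontrivial valuation subring of K that is weakly compatible with G. -/

import Mathlib

/-- `O` is weakly compatible with `G` if there is an ideal `A` of `O` with radical the
maximal ideal and `1 + A ⊆ G`. -/
def WeaklyCompatible {K : Type*} [Field K] (O : ValuationSubring K) (G : Subgroup Kˣ) : Prop :=
  ∃ A : Ideal O, A.radical = IsLocalRing.maximalIdeal O ∧ ∀ a ∈ A, ∃ u ∈ G, (u : K) = 1 + (a : K)

/-- `O` is coarsely compatible with `G` if it is weakly compatible with `G` and no valuation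
subring properly containing `O` has its unit group contained in `G`. -/
def CoarselyCompatible {K : Type*} [Field K] (O : ValuationSubring K) (G : Subgroup Kˣ) : Prop :=
  WeaklyCompatible O G ∧ ∀ O' : ValuationSubring K, O < O' → ¬ (O'.unitGroup ≤ G)

section Aux

variable {K : Type*} [Field K]

lemma VS.le_total_of_le {O O₁ O₂ : ValuationSubring K}
    (h1 : O ≤ O₁) (h2 : O ≤ O₂) : O₁ ≤ O₂ ∨ O₂ ≤ O₁ := by
  by_contra hc
  push_neg at hc
  obtain ⟨h12, h21⟩ := hc
  rw [SetLike.not_le_iff_exists] at h12 h21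
  obtain ⟨x, hx1, hx2⟩ := h12
  obtain ⟨y, hy2, hy1⟩ := h21
  have hx0 : x ≠ 0 := fun h => hx2 (h ▸ zero_mem _)
  have hy0 : y ≠ 0 := fun h => hy1 (h ▸ zero_mem _)
  rcases O.mem_or_inv_mem (x * y⁻¹) with h | h
  · have : x * y⁻¹ * y ∈ O₂ := mul_mem (h2 h) hy2
    rw [inv_mul_cancel_right₀ hy0] at this
    exact hx2 this
  · rw [mul_inv, inv_inv] at h
    have : x * (x⁻¹ * y) ∈ O₁ := mul_mem hx1 (h1 h)
    rw [mul_inv_cancel_left₀ hx0] at this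
    exact hy1 this

lemma VS.isUnit_of_inv_mem {A : ValuationSubring K} {x : A} (hx : (x : K) ≠ 0)
    (h : (x : K)⁻¹ ∈ A) : IsUnit x := by
  refine IsUnit.of_mul_eq_one (a := x) ⟨(x : K)⁻¹, h⟩ (Subtype.ext ?_)
  push_cast
  exact mul_inv_cancel₀ hx

lemma VS.inv_mem_of_isUnit {A : ValuationSubring K} {x : A} (h : IsUnit x) :
    (x : K)⁻¹ ∈ A := by
  obtain ⟨y, hy⟩ := isUnit_iff_exists_inv.mp h
  have : (x : K) * (y : K) = 1 := by
    have := congrArg (fun z : A => (z : K)) hy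
    push_cast at this
    exact this
  rw [inv_eq_of_mul_eq_one_right this]
  exact y.2

lemma VS.mem_unitGroup_of {A : ValuationSubring K} {u : Kˣ} (h1 : (u : K) ∈ A)
    (h2 : ((u⁻¹ : Kˣ) : K) ∈ A) : u ∈ A.unitGroup := by
  rw [ValuationSubring.mem_unitGroup_iff]
  have l1 : A.valuation u ≤ 1 := (A.valuation_le_one_iff _).mpr h1
  have l2 : A.valuation ((u : K)⁻¹) ≤ 1 := by
    rw [← Units.val_inv_eq_inv_val]
    exact (A.valuation_le_one_iff _).mpr h2
  have key : A.valuation u * A.valuation ((u : K)⁻¹) = 1 := by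
    rw [← map_mul, mul_inv_cancel₀ (Units.ne_zero u), map_one]
  refine le_antisymm l1 ?_
  calc (1 : _) = A.valuation u * A.valuation ((u : K)⁻¹) := key.symm
    _ ≤ A.valuation u * 1 := mul_le_mul_right l2 _
    _ = A.valuation u := mul_one _

/-- The ideal of the coarsening `O'` induced by an ideal `A` of `O`. -/
def coarsenIdeal (O : ValuationSubring K) (O' : ValuationSubring K) (A : Ideal O) :
    Ideal O' where
  carrier := {x : O' | ∀ c : O', ∃ a ∈ A, (a : K) = (c : K) * (x : K)}
  add_mem' := by
    intro a b ha hb c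
    obtain ⟨p, hp, hpe⟩ := ha c
    obtain ⟨q, hq, hqe⟩ := hb c
    exact ⟨p + q, A.add_mem hp hq, by push_cast [hpe, hqe]; ring⟩
  zero_mem' := by
    intro c
    exact ⟨0, A.zero_mem, by push_cast; ring⟩
  smul_mem' := by
    intro r x hx c
    obtain ⟨p, hp, hpe⟩ := hx (c * r)
    refine ⟨p, hp, ?_⟩
    rw [hpe, smul_eq_mul]
    push_cast
    ring

lemma mem_coarsenIdeal {O O' : ValuationSubring K} {A : Ideal O} {x : O'} :
    x ∈ coarsenIdeal O O' A ↔ ∀ c : O', ∃ a ∈ A, (a : K) = (c : K) * (x : K) :=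
  Iff.rfl

/-- Weak compatibility is preserved under coarsening. -/
lemma WeaklyCompatible.mono {O O' : ValuationSubring K} {G : Subgroup Kˣ}
    (hle : O ≤ O') (hw : WeaklyCompatible O G) : WeaklyCompatible O' G := by
  obtain ⟨A, hArad, hAG⟩ := hw
  have hAne : (1 : O) ∉ A := by
    intro h1
    have h2 : (1 : O) ∈ A.radical := Ideal.le_radical h1
    rw [hArad] at h2
    exact (mem_nonunits_iff.mp h2) isUnit_one
  refine ⟨coarsenIdeal O O' A, le_antisymm ?_ ?_, ?_⟩
  · -- radical ≤ maximal ideal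
    have h1 : coarsenIdeal O O' A ≤ IsLocalRing.maximalIdeal O' := by
      intro x hx
      rw [IsLocalRing.mem_maximalIdeal, mem_nonunits_iff]
      intro hu
      obtain ⟨y, hy⟩ := isUnit_iff_exists_inv.mp hu
      obtain ⟨a, haA, hae⟩ := mem_coarsenIdeal.mp hx y
      have hxy : (y : K) * (x : K) = 1 := by
        have := congrArg (fun z : O' => (z : K)) hy
        push_cast at this
        rw [mul_comm] at this
        exact this
      have ha1 : a = 1 := Subtype.ext (by rw [hae, hxy]; norm_num)
      exact hAne (ha1 ▸ haA)
    calc (coarsenIdeal O O' A).radical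
        ≤ (IsLocalRing.maximalIdeal O').radical := Ideal.radical_mono h1
      _ = IsLocalRing.maximalIdeal O' :=
          (IsLocalRing.maximalIdeal.isMaximal O').isPrime.radical
  · -- maximal ideal ≤ radical
    intro x hxm
    by_cases hx0 : (x : K) = 0
    · refine ⟨1, ?_⟩
      rw [pow_one, mem_coarsenIdeal]
      intro c
      exact ⟨0, A.zero_mem, by rw [hx0]; push_cast; ring⟩
    · have hxnu : ¬ IsUnit x := mem_nonunits_iff.mp hxm
      have hinv : (x : K)⁻¹ ∉ O' := fun h => hxnu (VS.isUnit_of_inv_mem hx0 h)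
      have hxO : (x : K) ∈ O := (O.mem_or_inv_mem (x : K)).resolve_right
        (fun h => hinv (hle h))
      have hxOnu : ¬ IsUnit (⟨(x : K), hxO⟩ : O) :=
        fun hu => hinv (hle (VS.inv_mem_of_isUnit hu))
      have hrad : (⟨(x : K), hxO⟩ : O) ∈ A.radical := by
        rw [hArad]
        exact hxOnu
      obtain ⟨m, hm⟩ := hrad
      refine ⟨m + 1, ?_⟩
      rw [mem_coarsenIdeal]
      intro c
      have hcx : (c : K) * (x : K) ∈ O := by
        by_cases hc0 : (c : K) = 0
        · rw [hc0, zero_mul]; exact zero_mem _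
        · by_contra hcxn
          have h1 : ((c : K) * (x : K))⁻¹ ∈ O := (O.mem_or_inv_mem _).resolve_left hcxn
          apply hinv
          have he : (x : K)⁻¹ = (c : K) * ((c : K) * (x : K))⁻¹ := by
            field_simp
          rw [he]
          exact mul_mem c.2 (hle h1)
      refine ⟨⟨_, hcx⟩ * (⟨(x : K), hxO⟩ : O) ^ m, Ideal.mul_mem_left _ _ hm, ?_⟩
      push_cast
      ring
  · -- 1 + A' ⊆ G
    intro a ha
    obtain ⟨p, hp, hpe⟩ := mem_coarsenIdeal.mp ha 1
    obtain ⟨u, hu, hue⟩ := hAG p hp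
    refine ⟨u, hu, ?_⟩
    rw [hue, hpe]
    push_cast
    ring

end Aux

theorem OG_nontrivial_iff
    {K : Type*} [Field K] (G : Subgroup Kˣ) :
    (⋂ O ∈ {O : ValuationSubring K | CoarselyCompatible O G}, (O : Set K)) ≠ Set.univ ↔
      (G ≠ ⊤ ∧ ∃ O : ValuationSubring K, (O : Set K) ≠ Set.univ ∧ WeaklyCompatible O G) := by
  constructor
  · intro h
    obtain ⟨O, hOcc, hOne⟩ :
        ∃ O : ValuationSubring K, CoarselyCompatible O G ∧ (O : Set K) ≠ Set.univ := by
      by_contra h'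
      push_neg at h'
      apply h
      rw [Set.eq_univ_iff_forall]
      intro x
      simp only [Set.mem_iInter, SetLike.mem_coe, Set.mem_setOf_eq]
      intro O hO
      have hO' := h' O hO
      rw [← SetLike.mem_coe, hO']
      trivial
    refine ⟨?_, O, hOne, hOcc.1⟩
    rintro rfl
    have hOlt : O < ⊤ := lt_of_le_of_ne le_top (by
      intro he
      apply hOne
      rw [he]
      ext x
      simp [ValuationSubring.mem_top])
    exact hOcc.2 ⊤ hOlt le_top
  · rintro ⟨hG, O, hOne, hw⟩
    by_cases hS : ∃ O' : ValuationSubring K, O ≤ O' ∧ O'.unitGroup ≤ G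
    · -- there is a coarsening with unit group inside G; take the union of all of them
      obtain ⟨O₀, hO₀le, hO₀G⟩ := hS
      haveI : Nonempty {O' : ValuationSubring K // O ≤ O' ∧ O'.unitGroup ≤ G} :=
        ⟨⟨O₀, hO₀le, hO₀G⟩⟩
      have hdir : Directed (· ≤ ·)
          (fun i : {O' : ValuationSubring K // O ≤ O' ∧ O'.unitGroup ≤ G} => i.1.toSubring) := by
        intro i j
        rcases VS.le_total_of_le i.2.1 j.2.1 with h | h
        · exact ⟨j, fun x hx => h hx, le_refl _⟩
        · exact ⟨i, le_refl _, fun x hx => h hx⟩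
      have hmemB : ∀ x : K,
          x ∈ (⨆ i : {O' : ValuationSubring K // O ≤ O' ∧ O'.unitGroup ≤ G}, i.1.toSubring) ↔
            ∃ i : {O' : ValuationSubring K // O ≤ O' ∧ O'.unitGroup ≤ G}, x ∈ i.1 :=
        fun x => Subring.mem_iSup_of_directed hdir
      let O'' : ValuationSubring K :=
        { (⨆ i : {O' : ValuationSubring K // O ≤ O' ∧ O'.unitGroup ≤ G}, i.1.toSubring) with
          mem_or_inv_mem' := fun x => (O₀.mem_or_inv_mem x).imp
            (fun hx => (hmemB x).mpr ⟨⟨O₀, hO₀le, hO₀G⟩, hx⟩)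
            (fun hx => (hmemB x⁻¹).mpr ⟨⟨O₀, hO₀le, hO₀G⟩, hx⟩) }
      have hmem'' : ∀ x : K, x ∈ O'' ↔
          ∃ i : {O' : ValuationSubring K // O ≤ O' ∧ O'.unitGroup ≤ G}, x ∈ i.1 := hmemB
      have hOle : O ≤ O'' := fun x hx => (hmem'' x).mpr ⟨⟨O₀, hO₀le, hO₀G⟩, hO₀le hx⟩
      have hunit : O''.unitGroup ≤ G := by
        intro u hu
        rw [ValuationSubring.mem_unitGroup_iff] at hu
        have h1 : (u : K) ∈ O'' := O''.mem_of_valuation_le_one _ hu.le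
        have h2 : ((u⁻¹ : Kˣ) : K) ∈ O'' := O''.mem_of_valuation_le_one _ (by
          rw [Units.val_inv_eq_inv_val, map_inv₀, hu, inv_one])
        obtain ⟨i, hi⟩ := (hmem'' _).mp h1
        obtain ⟨j, hj⟩ := (hmem'' _).mp h2
        rcases VS.le_total_of_le i.2.1 j.2.1 with h | h
        · exact j.2.2 (VS.mem_unitGroup_of (h hi) hj)
        · exact i.2.2 (VS.mem_unitGroup_of hi (h hj))
      have hcc : CoarselyCompatible O'' G := by
        refine ⟨hw.mono hOle, ?_⟩
        intro O₃ hlt hle3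
        have hle'' : O₃ ≤ O'' := fun x hx =>
          (hmem'' x).mpr ⟨⟨O₃, hOle.trans hlt.le, hle3⟩, hx⟩
        exact hlt.not_ge hle''
      have hne : (O'' : Set K) ≠ Set.univ := by
        intro he
        apply hG
        rw [eq_top_iff]
        intro u _
        refine hunit (VS.mem_unitGroup_of ?_ ?_) <;>
          · rw [← SetLike.mem_coe, he]; trivial
      intro heq
      apply hne
      refine Set.eq_univ_of_univ_subset ?_
      rw [← heq]
      exact Set.biInter_subset_of_mem hcc
    · -- no coarsening has unit group inside G : O itself is coarsely compatible
      push_neg at hS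
      have hcc : CoarselyCompatible O G := ⟨hw, fun O' hlt hle => hS O' hlt.le hle⟩
      intro heq
      apply hOne
      refine Set.eq_univ_of_univ_subset ?_
      rw [← heq]
      exact Set.biInter_subset_of_mem hcc
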